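/- Let X = (c₀, |||·|||) with |||x||| = ‖x‖_∞ + ‖(xₙ/2ⁿ)ₙ‖₂, K its closed unit ball, and P = (c₀)₊. Then no point of K is strictly maximal for (K,P): StMax(K,P) = ∅. -/

import Mathlib

open scoped ZeroAtInfty

/-- The single-coordinate sequence: value `t` at `m`, zero elsewhere. -/
noncomputable def sgl (m : ℕ) (t : ℝ) : C₀(ℕ, ℝ) :=
  ⟨⟨fun n => if n = m then t else 0, continuous_of_discreteTopology⟩, by
    rw [Filter.cocompact_eq_cofinite]
    refine Filter.Tendsto.congr' ?_ tendsto_const_nhds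
    have : {n : ℕ | ¬ ((0:ℝ) = if n = m then t else 0)} ⊆ {m} := by
      intro n hn
      by_contra hnm
      exact hn (by simp [if_neg (by simpa using hnm)])
    exact ((Set.finite_singleton m).subset this)⟩

lemma sgl_apply (m n : ℕ) (t : ℝ) : sgl m t n = if n = m then t else 0 := rfl

lemma coord_abs_le_norm (f : C₀(ℕ, ℝ)) (n : ℕ) : |f n| ≤ ‖f‖ := by
  simpa using BoundedContinuousFunction.norm_coe_le_norm f.toBCF n

lemma norm_le_of_coords (f : C₀(ℕ, ℝ)) (M : ℝ) (hM : 0 ≤ M) (h : ∀ n, |f n| ≤ M) :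
    ‖f‖ ≤ M := by
  rw [← ZeroAtInftyContinuousMap.norm_toBCF_eq_norm]
  exact (BoundedContinuousFunction.norm_le hM).2 (by simpa using h)

lemma sq_summable (f : C₀(ℕ, ℝ)) : Summable (fun n => (f n / 2 ^ (n + 1)) ^ 2) := by
  have hg : Summable (fun n : ℕ => (‖f‖ ^ 2 * (1/4)) * (1/4 : ℝ) ^ n) :=
    (summable_geometric_of_lt_one (by norm_num) (by norm_num)).mul_left _
  refine Summable.of_nonneg_of_le (fun n => sq_nonneg _) (fun n => ?_) hg
  have h1 : |f n / 2 ^ (n + 1)| ≤ ‖f‖ * (1/2) ^ (n + 1) := by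
    rw [abs_div, abs_pow, abs_two, div_le_iff₀ (by positivity)]
    calc |f n| ≤ ‖f‖ := coord_abs_le_norm f n
    _ = ‖f‖ * (1/2) ^ (n+1) * 2 ^ (n+1) := by
        rw [mul_assoc, div_pow, one_pow, div_mul_cancel₀]; · ring
        positivity
  calc (f n / 2 ^ (n + 1)) ^ 2 = |f n / 2 ^ (n + 1)| ^ 2 := (sq_abs _).symm
    _ ≤ (‖f‖ * (1/2) ^ (n + 1)) ^ 2 := by
        exact pow_le_pow_left₀ (abs_nonneg _) h1 2
    _ = ‖f‖ ^ 2 * (1/4) * (1/4) ^ n := by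
        rw [mul_pow, ← pow_mul, mul_comm (n+1) 2, pow_mul]
        norm_num [pow_succ]
        ring


lemma tsum_split_le (f w : C₀(ℕ, ℝ)) (m : ℕ) (hfw : ∀ n, n ≠ m → f n = w n) :
    (∑' n : ℕ, (f n / 2 ^ (n + 1)) ^ 2) ≤
      (∑' n : ℕ, (w n / 2 ^ (n + 1)) ^ 2) + (f m / 2 ^ (m + 1)) ^ 2 := by
  have hf := sq_summable f
  have hw := sq_summable w
  have e1 := Summable.tsum_eq_add_tsum_ite hf m
  have e2 := Summable.tsum_eq_add_tsum_ite hw m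
  have e3 : (∑' n : ℕ, if n = m then 0 else (f n / 2 ^ (n + 1)) ^ 2)
      = ∑' n : ℕ, if n = m then 0 else (w n / 2 ^ (n + 1)) ^ 2 := by
    refine tsum_congr fun n => ?_
    by_cases hnm : n = m
    · simp [hnm]
    · simp only [if_neg hnm, hfw n hnm]
  rw [e1, e2, e3]
  have := sq_nonneg (w m / 2 ^ (m + 1))
  linarith

set_option maxHeartbeats 2000000 in
/-- In `X = (c₀, |||·|||)` with `|||x||| = ‖x‖∞ + ‖(xₙ/2ⁿ)ₙ‖₂`, `K` the closed unit
ball of `|||·|||` and `P = (c₀)₊`, no point of `K` is strictly maximal for `(K, P)`: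
`StMax(K, P) = ∅`.  (Here `δB_X` and `εB_X` are balls of the norm `|||·|||`.) -/
theorem stmt12 :
    let N : C₀(ℕ, ℝ) → ℝ := fun x => ‖x‖ + Real.sqrt (∑' n : ℕ, (x n / 2 ^ (n + 1)) ^ 2)
    let K : Set C₀(ℕ, ℝ) := {x | N x ≤ 1}
    let P : Set C₀(ℕ, ℝ) := {x | ∀ n : ℕ, 0 ≤ x n}
    ∀ x ∈ K, ¬ (∀ ε > (0 : ℝ), ∃ δ > (0 : ℝ),
      ∀ z : C₀(ℕ, ℝ), (∃ p ∈ P, N (z - p) ≤ δ) → x + z ∈ K → N z ≤ ε) := by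
  intro N K P x hx h
  have hNdef : ∀ y : C₀(ℕ, ℝ),
      N y = ‖y‖ + Real.sqrt (∑' n : ℕ, (y n / 2 ^ (n + 1)) ^ 2) := fun _ => rfl
  set S := ∑' n : ℕ, (x n / 2 ^ (n + 1)) ^ 2 with hSdef
  have hSnn : 0 ≤ S := tsum_nonneg fun n => sq_nonneg _
  set θ := Real.sqrt S with hθdef
  have hθnn : 0 ≤ θ := Real.sqrt_nonneg _
  have hxK : ‖x‖ + θ ≤ 1 := hx
  have hxnorm : ‖x‖ ≤ 1 - θ := by linarith
  have hθ1 : θ ≤ 1 := le_trans (by linarith [norm_nonneg x]) hxK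
  -- tsum of sgl
  have sgl_tsum : ∀ (m : ℕ) (t : ℝ),
      (∑' n : ℕ, ((sgl m t) n / 2 ^ (n + 1)) ^ 2) = (t / 2 ^ (m + 1)) ^ 2 := by
    intro m t
    have hm : (sgl m t) m = t := by rw [sgl_apply, if_pos rfl]
    conv_rhs => rw [← hm]
    exact tsum_eq_single (f := fun n : ℕ => ((sgl m t) n / 2 ^ (n + 1)) ^ 2) m
      (fun n hn => by simp [sgl_apply, if_neg hn])
  rcases eq_or_lt_of_le hθnn with hθ0 | hθpos
  · -- θ = 0, hence x = 0
    have hS0 : S = 0 := (Real.sqrt_eq_zero hSnn).1 hθ0.symm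
    have hx0 : x = 0 := by
      have hsum := sq_summable x
      rw [hSdef] at hS0
      have hall : ∀ n, (x n / 2 ^ (n + 1)) ^ 2 = 0 :=
        fun n => le_antisymm (hS0 ▸ Summable.le_tsum hsum n (fun m _ => sq_nonneg _)) (sq_nonneg _)
      ext n
      have hx' : x n / 2 ^ (n + 1) = 0 := sq_eq_zero_iff.1 (hall n)
      have h2 : (2:ℝ) ^ (n+1) ≠ 0 := by positivity
      have : x n = 0 := by
        field_simp at hx'
        simpa using hx'
      simpa using this
    obtain ⟨δ, hδpos, hz⟩ := h (1/4) (by norm_num)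
    set z := sgl 0 (1/2 : ℝ) with hzdef
    have hz_in : ∃ p ∈ P, N (z - p) ≤ δ := by
      refine ⟨z, fun n => ?_, ?_⟩
      · rw [sgl_apply]; split <;> norm_num
      · simp only [sub_self]
        have : N (0 : C₀(ℕ, ℝ)) = 0 := by
          rw [hNdef]
          simp
        rw [this]
        exact le_of_lt hδpos
    have hNz : N z = 1/2 + 1/4 := by
      rw [hNdef, sgl_tsum]
      have hnz : ‖z‖ = 1/2 := by
        refine le_antisymm (norm_le_of_coords _ _ (by norm_num) fun n => ?_) ?_
        · rw [hzdef, sgl_apply]; split <;> simp [abs_of_nonneg]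
        · calc (1/2 : ℝ) = |z 0| := by rw [hzdef, sgl_apply]; simp [abs_of_nonneg]
          _ ≤ ‖z‖ := coord_abs_le_norm z 0
      rw [hnz, Real.sqrt_sq (by norm_num)]
      norm_num
    have hxz : x + z ∈ K := by
      show N (x + z) ≤ 1
      rw [hx0, zero_add, hNz]; norm_num
    have := hz z hz_in hxz
    rw [hNz] at this; norm_num at this
  · -- θ > 0
    have hxne : x ≠ 0 := by
      intro hx0
      rw [hx0] at hSdef
      have : S = 0 := by
        rw [hSdef]
        convert tsum_zero with n
        simp [hx0]
      rw [hθdef, this, Real.sqrt_zero] at hθpos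
      exact lt_irrefl _ hθpos
    have hxpos : 0 < ‖x‖ := norm_pos_iff.2 hxne
    have hθlt1 : θ < 1 := by linarith
    set t := min θ (1 - θ) / 2 with htdef
    have htpos : 0 < t := by
      apply div_pos _ two_pos
      exact lt_min hθpos (by linarith)
    have ht_le : t ≤ (1 - θ) / 2 := by
      have := min_le_right θ (1 - θ)
      rw [htdef]; linarith
    have ht_le1 : t ≤ 1/2 := by
      have : min θ (1 - θ) ≤ 1 := le_trans (min_le_right _ _) (by linarith)
      rw [htdef]; linarith
    obtain ⟨δ, hδpos, hz⟩ := h (t/4) (by positivity)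
    set c := min δ (t/2) with hcdef
    have hcpos : 0 < c := lt_min hδpos (by positivity)
    have hcδ : c ≤ δ := min_le_left _ _
    have hct : c ≤ t/2 := min_le_right _ _
    have hc1 : c ≤ 1/4 := by linarith
    -- choose m
    have htend : Filter.Tendsto (fun n => x n) Filter.atTop (nhds 0) := by
      have := zero_at_infty x
      rwa [Filter.cocompact_eq_cofinite, Nat.cofinite_eq_atTop] at this
    have h1 : ∀ᶠ m in Filter.atTop, |x m| ≤ (1 - θ)/4 := by
      have := Metric.tendsto_atTop.1 htend ((1-θ)/4) (by linarith)
      obtain ⟨Nn, hNn⟩ := this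
      refine Filter.eventually_atTop.2 ⟨Nn, fun m hm => ?_⟩
      have := hNn m hm
      rw [Real.dist_eq, sub_zero] at this
      exact le_of_lt this
    have h2 : ∀ᶠ m in Filter.atTop, (2 : ℝ) / 2 ^ (m + 1) ≤ c := by
      have htend2 : Filter.Tendsto (fun m : ℕ => (2:ℝ) / 2 ^ (m+1)) Filter.atTop (nhds 0) := by
        have := tendsto_pow_atTop_nhds_zero_of_lt_one (r := (1/2 : ℝ)) (by norm_num) (by norm_num)
        have h2' : ∀ m : ℕ, (2:ℝ) / 2 ^ (m+1) = ((1/2:ℝ)^m) := by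
          intro m
          rw [pow_succ, one_div_pow, mul_comm, ← div_div, div_self two_ne_zero]
        simpa [h2'] using this
      have := Metric.tendsto_atTop.1 htend2 c hcpos
      obtain ⟨Nn, hNn⟩ := this
      refine Filter.eventually_atTop.2 ⟨Nn, fun m hm => ?_⟩
      have := hNn m hm
      rw [Real.dist_eq, sub_zero, abs_of_pos (by positivity)] at this
      exact le_of_lt this
    obtain ⟨m, hm1, hm2⟩ := (h1.and h2).exists
    have hxm1 : |x m| ≤ 1 := le_trans (coord_abs_le_norm x m) (by linarith)
    have hm2' : (|x m| + t) / 2 ^ (m + 1) ≤ c := by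
      refine le_trans ?_ hm2
      gcongr
      linarith
    -- define z
    set z := sgl m t - c • x with hzdef
    have hz_coord : ∀ n, z n = (if n = m then t else 0) - c * x n := fun n => rfl
    have hy_coord : ∀ n, (x + z) n = (1 - c) * x n + (if n = m then t else 0) := by
      intro n
      show x n + ((if n = m then t else 0) - c * x n) = _
      ring
    -- near P
    have hz_in : ∃ p ∈ P, N (z - p) ≤ δ := by
      refine ⟨sgl m t, fun n => ?_, ?_⟩
      · rw [sgl_apply]; split
        · exact le_of_lt htpos
        · exact le_refl 0
      · have hsub : z - sgl m t = -(c • x) := by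
          rw [hzdef]; abel
        rw [hsub, hNdef]
        have hnorm1 : ‖-(c • x)‖ = c * ‖x‖ := by
          rw [norm_neg, show ‖c • x‖ = ‖c‖ * ‖x‖ from norm_smul c x,
            Real.norm_eq_abs, abs_of_pos hcpos]
        have htsum1 : (∑' n : ℕ, ((-(c • x)) n / 2 ^ (n + 1)) ^ 2) = c ^ 2 * S := by
          rw [hSdef, ← tsum_mul_left]
          congr 1
          ext n
          have : (-(c • x)) n = -(c * x n) := rfl
          rw [this]
          ring
        rw [hnorm1, htsum1, Real.sqrt_mul (sq_nonneg c), Real.sqrt_sq (le_of_lt hcpos)]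
        calc c * ‖x‖ + c * θ = c * (‖x‖ + θ) := by ring
        _ ≤ c * 1 := by
            apply mul_le_mul_of_nonneg_left hxK (le_of_lt hcpos)
        _ ≤ δ := by linarith
    -- membership of x + z in K
    have hxz : x + z ∈ K := by
      show N (x + z) ≤ 1
      rw [hNdef]
      have hnorm_y : ‖x + z‖ ≤ (1 - c) * (1 - θ) := by
        apply norm_le_of_coords _ _ (by nlinarith)
        intro n
        rw [hy_coord n]
        by_cases hnm : n = m
        · rw [if_pos hnm, hnm]
          calc |(1 - c) * x m + t| ≤ (1 - c) * |x m| + t := by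
                refine le_trans (abs_add_le _ _) ?_
                rw [abs_mul, abs_of_nonneg (by linarith), abs_of_pos htpos]
          _ ≤ (1 - c) * (1 - θ) := by nlinarith
        · rw [if_neg hnm, add_zero, abs_mul, abs_of_nonneg (show (0:ℝ) ≤ 1 - c by linarith)]
          have := coord_abs_le_norm x n
          nlinarith
      have htsum_y : (∑' n : ℕ, ((x + z) n / 2 ^ (n + 1)) ^ 2) ≤ ((1 - c) * θ + c) ^ 2 := by
        have hw_eq : ∀ n, ((1 - c) • x) n = (1 - c) * x n := fun n => rfl
        have h1 : ∀ n, n ≠ m → (x + z) n = ((1 - c) • x) n := by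
          intro n hn
          rw [hy_coord n, if_neg hn, add_zero, hw_eq]
        have hb := tsum_split_le (x + z) ((1 - c) • x) m h1
        have hwsum : (∑' n : ℕ, (((1 - c) • x) n / 2 ^ (n + 1)) ^ 2) = (1 - c) ^ 2 * S := by
          rw [hSdef, ← tsum_mul_left]
          exact tsum_congr fun n => by rw [hw_eq]; ring
        have hgm : ((x + z) m / 2 ^ (m + 1)) ^ 2 ≤ c ^ 2 := by
          rw [hy_coord m, if_pos rfl]
          have habs : |(1 - c) * x m + t| ≤ |x m| + t := by
            refine le_trans (abs_add_le _ _) ?_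
            rw [abs_mul, abs_of_nonneg (show (0:ℝ) ≤ 1 - c by linarith), abs_of_pos htpos]
            nlinarith [mul_nonneg hcpos.le (abs_nonneg (x m))]
          calc (((1 - c) * x m + t) / 2 ^ (m + 1)) ^ 2
              = (|(1 - c) * x m + t| / 2 ^ (m + 1)) ^ 2 := by
                rw [div_pow, div_pow, sq_abs]
            _ ≤ ((|x m| + t) / 2 ^ (m + 1)) ^ 2 := by
                apply pow_le_pow_left₀ (by positivity)
                gcongr
            _ ≤ c ^ 2 := pow_le_pow_left₀ (by positivity) hm2' 2
        have hθsq : θ ^ 2 = S := Real.sq_sqrt hSnn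
        have hcross : 0 ≤ 2 * ((1 - c) * θ) * c := by
          have : (0:ℝ) ≤ (1 - c) * θ := mul_nonneg (by linarith) hθnn
          nlinarith
        calc (∑' n : ℕ, ((x + z) n / 2 ^ (n + 1)) ^ 2)
            ≤ (1 - c) ^ 2 * S + c ^ 2 := by rw [← hwsum]; linarith
          _ = ((1 - c) * θ) ^ 2 + c ^ 2 := by rw [mul_pow, hθsq]
          _ ≤ ((1 - c) * θ + c) ^ 2 := by nlinarith
      have hsqrt_y : Real.sqrt (∑' n : ℕ, ((x + z) n / 2 ^ (n + 1)) ^ 2) ≤ (1 - c) * θ + c := by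
        refine le_trans (Real.sqrt_le_sqrt htsum_y) ?_
        rw [Real.sqrt_sq (by nlinarith)]
      calc ‖x + z‖ + Real.sqrt (∑' n : ℕ, ((x + z) n / 2 ^ (n + 1)) ^ 2)
          ≤ (1 - c) * (1 - θ) + ((1 - c) * θ + c) := by linarith
        _ = 1 := by ring
    -- contradiction
    have hfinal := hz z hz_in hxz
    have hzm : t / 2 ≤ |z m| := by
      rw [hz_coord m, if_pos rfl]
      have : t - c * |x m| ≤ |t - c * x m| := by
        have h1 : t - c * x m ≥ t - c * |x m| := by
          nlinarith [le_abs_self (x m)]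
        have h2 : 0 ≤ t - c * |x m| := by nlinarith
        calc t - c * |x m| ≤ t - c * x m := h1
        _ ≤ |t - c * x m| := le_abs_self _
      nlinarith
    have hNz_lb : t / 2 ≤ N z := by
      rw [hNdef]
      have := le_trans hzm (coord_abs_le_norm z m)
      have hs : 0 ≤ Real.sqrt (∑' n : ℕ, (z n / 2 ^ (n + 1)) ^ 2) := Real.sqrt_nonneg _
      linarith
    linarith
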